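/- arXiv:math/0506421 — 3 statements merged into one kernel-verified Lean document; each statement's English description precedes it below -/
import Mathlib

section
/- Let ℓ ≥ 1, n ≥ 1, and let C be a family of (ℓ+1)-element subsets of [n]. Then C satisfies condition (C_{ℓ+1}) if and only if there exists an ℓ-generic matroid on the ground set [n] whose family of circuits of cardinality ℓ+1 is exactly C. -/
noncomputable section

/-- `C` is a circuit of the matroid `M`: a minimal dependent subset of the ground set. -/
def IsCircuitF (M : Matroid ℕ) (C : Finset ℕ) : Prop :=
  ↑C ⊆ M.E ∧ ¬ M.Indep ↑C ∧ ∀ x ∈ C, M.Indep ↑(C.erase x)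

/-- `M` is `ℓ`-generic: it has no circuits of cardinality at most `ℓ`. -/
def GenericM (ℓ : ℕ) (M : Matroid ℕ) : Prop :=
  ∀ C : Finset ℕ, IsCircuitF M C → ℓ < C.card

/-- `M` has rank `r`: it has a base of cardinality `r`. -/
def HasRank (M : Matroid ℕ) (r : ℕ) : Prop :=
  ∃ B : Finset ℕ, M.IsBase ↑B ∧ B.card = r

/-- Condition `(C_{ℓ+1})` for a family `𝒞` of `(ℓ+1)`-element subsets:  whenever
`C₁, C₂ ∈ 𝒞` and `|C₁ ∪ C₂| = ℓ+2`, every `(ℓ+1)`-element subset of `C₁ ∪ C₂` is in `𝒞`. -/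
def CondC (ℓ : ℕ) (𝒞 : Set (Finset ℕ)) : Prop :=
  ∀ C₁ ∈ 𝒞, ∀ C₂ ∈ 𝒞, (C₁ ∪ C₂).card = ℓ + 2 →
    ∀ C₃ : Finset ℕ, C₃ ⊆ C₁ ∪ C₂ → C₃.card = ℓ + 1 → C₃ ∈ 𝒞

end

/-- Every dependent finset contains a circuit. -/
lemma exists_circuitF_subset (M : Matroid ℕ) :
    ∀ S : Finset ℕ, ↑S ⊆ M.E → ¬ M.Indep ↑S → ∃ C, C ⊆ S ∧ IsCircuitF M C := by
  intro S
  induction S using Finset.strongInduction with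
  | _ S ih =>
    intro hSE hSdep
    by_cases h : ∀ x ∈ S, M.Indep ↑(S.erase x)
    · exact ⟨S, Finset.Subset.refl S, hSE, hSdep, h⟩
    · push_neg at h
      obtain ⟨x, hxS, hx⟩ := h
      obtain ⟨C, hCsub, hC⟩ := ih (S.erase x) (Finset.erase_ssubset hxS)
        ((Finset.coe_subset.2 (Finset.erase_subset x S)).trans hSE) hx
      exact ⟨C, hCsub.trans (Finset.erase_subset x S), hC⟩

/-- Key exchange lemma for the augmentation axiom, by induction on `(I \ J).card`. -/
lemma key_aug (ℓ : ℕ) (𝒞 : Set (Finset ℕ)) (hC : CondC ℓ 𝒞)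
    (hcard : ∀ C ∈ 𝒞, C.card = ℓ + 1) :
    ∀ k (I J : Finset ℕ), (I \ J).card = k → I.card = ℓ → J.card = ℓ + 1 → J ∉ 𝒞 →
      (∀ e ∈ J, e ∉ I → insert e I ∈ 𝒞) → False := by
  intro k
  induction k with
  | zero =>
    intro I J hk hI hJ hJC hins
    have hIJ : I ⊆ J := by
      rw [← Finset.sdiff_eq_empty_iff_subset]
      exact Finset.card_eq_zero.1 hk
    have hJI : ¬ J ⊆ I := fun h => by
      have := Finset.card_le_card h; omega
    obtain ⟨e, heJ, heI⟩ := Finset.not_subset.1 hJI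
    have h1 : insert e I ∈ 𝒞 := hins e heJ heI
    have h2 : insert e I = J := by
      apply Finset.eq_of_subset_of_card_le (Finset.insert_subset heJ hIJ)
      rw [Finset.card_insert_of_notMem heI]; omega
    exact hJC (h2 ▸ h1)
  | succ k ih =>
    intro I J hk hI hJ hJC hins
    have hIJne : (I \ J).Nonempty := by
      rw [← Finset.card_pos, hk]; omega
    obtain ⟨x, hx⟩ := hIJne
    have hxI : x ∈ I := (Finset.mem_sdiff.1 hx).1
    have hxJ : x ∉ J := (Finset.mem_sdiff.1 hx).2
    have hJI : ¬ J ⊆ I := fun h => by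
      have := Finset.card_le_card h; omega
    obtain ⟨e₁, he₁J, he₁I⟩ := Finset.not_subset.1 hJI
    set I' : Finset ℕ := insert e₁ (I.erase x) with hI'def
    have he₁Ie : e₁ ∉ I.erase x := fun h => he₁I (Finset.mem_of_mem_erase h)
    have hI'card : I'.card = ℓ := by
      rw [hI'def, Finset.card_insert_of_notMem he₁Ie, Finset.card_erase_of_mem hxI, hI]
      have : 1 ≤ I.card := Finset.card_pos.2 ⟨x, hxI⟩
      omega
    have hI'sdiff : I' \ J = (I \ J).erase x := by
      ext y
      simp only [hI'def, Finset.mem_sdiff, Finset.mem_insert, Finset.mem_erase]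
      constructor
      · rintro ⟨hy1 | hy2, hyJ⟩
        · exact absurd (hy1 ▸ he₁J) hyJ
        · exact ⟨hy2.1, hy2.2, hyJ⟩
      · rintro ⟨hyx, hyI, hyJ⟩
        exact ⟨Or.inr ⟨hyx, hyI⟩, hyJ⟩
    have hk' : (I' \ J).card = k := by
      rw [hI'sdiff, Finset.card_erase_of_mem hx, hk]
      omega
    refine ih I' J hk' hI'card hJ hJC ?_
    intro e heJ heI'
    have hee₁ : e ≠ e₁ := fun h => heI' (h ▸ Finset.mem_insert_self e₁ _)
    have heI : e ∉ I := by
      intro h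
      have hex : e ≠ x := fun hh => hxJ (hh ▸ heJ)
      exact heI' (Finset.mem_insert_of_mem (Finset.mem_erase.2 ⟨hex, h⟩))
    have hC1 : insert e₁ I ∈ 𝒞 := hins e₁ he₁J he₁I
    have hC2 : insert e I ∈ 𝒞 := hins e heJ heI
    have hU : insert e₁ I ∪ insert e I = insert e (insert e₁ I) := by
      ext y; simp only [Finset.mem_union, Finset.mem_insert]; tauto
    have hUcard : (insert e₁ I ∪ insert e I).card = ℓ + 2 := by
      rw [hU, Finset.card_insert_of_notMem (by
        simp only [Finset.mem_insert]; push_neg; exact ⟨hee₁, heI⟩),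
        Finset.card_insert_of_notMem he₁I, hI]
    refine hC (insert e₁ I) hC1 (insert e I) hC2 hUcard (insert e I') ?_ ?_
    · rw [hU]
      intro y hy
      simp only [hI'def, Finset.mem_insert, Finset.mem_erase] at hy ⊢
      rcases hy with rfl | rfl | ⟨_, hyI⟩
      · exact Or.inl rfl
      · exact Or.inr (Or.inl rfl)
      · exact Or.inr (Or.inr hyI)
    · rw [Finset.card_insert_of_notMem heI', hI'card]

theorem condC_iff_exists_generic_matroid
    (ℓ n : ℕ) (hℓ : 1 ≤ ℓ) (hn : 1 ≤ n) (𝒞 : Set (Finset ℕ))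
    (h𝒞 : ∀ C ∈ 𝒞, C ⊆ Finset.Icc 1 n ∧ C.card = ℓ + 1) :
    CondC ℓ 𝒞 ↔
      ∃ M : Matroid ℕ, M.E = ↑(Finset.Icc 1 n) ∧ GenericM ℓ M ∧
        ∀ C : Finset ℕ, (IsCircuitF M C ∧ C.card = ℓ + 1) ↔ C ∈ 𝒞 := by
  classical
  constructor
  · -- forward: construct the matroid
    intro hC
    set Ind : Finset ℕ → Prop :=
      fun I => I ⊆ Finset.Icc 1 n ∧ I.card ≤ ℓ + 1 ∧ ∀ C ∈ 𝒞, ¬ C ⊆ I with hInd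
    have indep_empty : Ind ∅ := by
      refine ⟨Finset.empty_subset _, by simp, fun C hCm hsub => ?_⟩
      have h1 := (h𝒞 C hCm).2
      have h3 := Finset.card_le_card hsub
      simp only [Finset.card_empty, Nat.le_zero, Finset.card_eq_zero] at h3
      rw [h3] at h1
      simp at h1
    have indep_subset : ∀ ⦃I J⦄, Ind J → I ⊆ J → Ind I := by
      rintro I J ⟨hJE, hJc, hJC⟩ hIJ
      exact ⟨hIJ.trans hJE, (Finset.card_le_card hIJ).trans hJc,
        fun C hCm hsub => hJC C hCm (hsub.trans hIJ)⟩
    have indep_aug : ∀ ⦃I J⦄, Ind I → Ind J → I.card < J.card →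
        ∃ e ∈ J, e ∉ I ∧ Ind (insert e I) := by
      rintro I J ⟨hIE, hIc, hIC⟩ ⟨hJE, hJc, hJC⟩ hcard
      have hJI : ¬ J ⊆ I := fun h => by have := Finset.card_le_card h; omega
      by_cases hsmall : I.card < ℓ
      · obtain ⟨e, heJ, heI⟩ := Finset.not_subset.1 hJI
        refine ⟨e, heJ, heI, Finset.insert_subset (hJE heJ) hIE, ?_, ?_⟩
        · rw [Finset.card_insert_of_notMem heI]; omega
        · intro C hCm hsub
          have h1 := (h𝒞 C hCm).2
          have h2 := Finset.card_le_card hsub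
          rw [Finset.card_insert_of_notMem heI] at h2
          omega
      · have hIcl : I.card = ℓ := by omega
        have hJcl : J.card = ℓ + 1 := by omega
        by_contra hcon
        push_neg at hcon
        refine key_aug ℓ 𝒞 hC (fun C hCm => (h𝒞 C hCm).2) (I \ J).card I J rfl hIcl hJcl
          (fun h => hJC J h (Finset.Subset.refl J)) ?_
        intro e heJ heI
        have hnind := hcon e heJ heI
        have hsub : insert e I ⊆ Finset.Icc 1 n := Finset.insert_subset (hJE heJ) hIE
        have hcard' : (insert e I).card = ℓ + 1 := by
          rw [Finset.card_insert_of_notMem heI]; omega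
        have : ∃ C ∈ 𝒞, C ⊆ insert e I := by
          by_contra hno
          push_neg at hno
          exact hnind ⟨hsub, le_of_eq hcard', hno⟩
        obtain ⟨C, hCm, hCsub⟩ := this
        have : C = insert e I := Finset.eq_of_subset_of_card_le hCsub
          (by rw [hcard', (h𝒞 C hCm).2])
        exact this ▸ hCm
    have subset_ground : ∀ ⦃I⦄, Ind I → (I : Set ℕ) ⊆ ↑(Finset.Icc 1 n) :=
      fun I hI => Finset.coe_subset.2 hI.1
    set M : Matroid ℕ := (IndepMatroid.ofFinset (↑(Finset.Icc 1 n)) Ind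
      indep_empty indep_subset indep_aug subset_ground).matroid with hM
    have hME : M.E = ↑(Finset.Icc 1 n) := rfl
    have hMind : ∀ I : Finset ℕ, M.Indep ↑I ↔ Ind I := by
      intro I
      rw [hM, IndepMatroid.matroid_indep_iff, IndepMatroid.ofFinset_indep]
    refine ⟨M, hME, ?_, ?_⟩
    · -- generic
      intro D hD
      by_contra hle
      push_neg at hle
      refine hD.2.1 ((hMind D).2 ⟨?_, by omega, ?_⟩)
      · exact Finset.coe_subset.1 (hD.1.trans_eq hME)
      · intro C hCm hsub
        have h1 := (h𝒞 C hCm).2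
        have := Finset.card_le_card hsub
        omega
    · -- circuits of cardinality ℓ+1 are exactly 𝒞
      intro D
      constructor
      · rintro ⟨⟨hDE, hDdep, -⟩, hDcard⟩
        have hDsub : D ⊆ Finset.Icc 1 n := Finset.coe_subset.1 (hDE.trans_eq hME)
        have : ∃ C ∈ 𝒞, C ⊆ D := by
          by_contra hno
          push_neg at hno
          exact hDdep ((hMind D).2 ⟨hDsub, le_of_eq hDcard, hno⟩)
        obtain ⟨C, hCm, hCsub⟩ := this
        have : C = D := Finset.eq_of_subset_of_card_le hCsub
          (by rw [hDcard, (h𝒞 C hCm).2])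
        exact this ▸ hCm
      · intro hDm
        obtain ⟨hDsub, hDcard⟩ := h𝒞 D hDm
        refine ⟨⟨by rw [hME]; exact Finset.coe_subset.2 hDsub, ?_, ?_⟩, hDcard⟩
        · intro hind
          exact ((hMind D).1 hind).2.2 D hDm (Finset.Subset.refl D)
        · intro x hxD
          refine (hMind _).2 ⟨(Finset.erase_subset x D).trans hDsub, ?_, ?_⟩
          · rw [Finset.card_erase_of_mem hxD]; omega
          · intro C hCm hsub
            have h1 := (h𝒞 C hCm).2
            have := Finset.card_le_card hsub
            rw [Finset.card_erase_of_mem hxD] at this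
            omega
  · -- backward
    rintro ⟨M, hME, hgen, hcirc⟩
    intro C₁ hC₁ C₂ hC₂ hU C₃ hC₃sub hC₃card
    obtain ⟨circ₁, hcard₁⟩ := (hcirc C₁).2 hC₁
    obtain ⟨circ₂, hcard₂⟩ := (hcirc C₂).2 hC₂
    set U : Finset ℕ := C₁ ∪ C₂ with hUdef
    have hUE : ↑U ⊆ M.E := by
      rw [hUdef, Finset.coe_union]
      exact Set.union_subset circ₁.1 circ₂.1
    -- C₁ \ C₂ and C₂ \ C₁ are singletons
    have hsd1 : (C₁ \ C₂).card = 1 := by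
      have h1 : C₁ \ C₂ = U \ C₂ := by
        rw [hUdef, Finset.union_sdiff_right]
      rw [h1, Finset.card_sdiff_of_subset Finset.subset_union_right, hU, hcard₂]
      omega
    have hsd2 : (C₂ \ C₁).card = 1 := by
      have h1 : C₂ \ C₁ = U \ C₁ := by
        rw [hUdef, Finset.union_sdiff_left]
      rw [h1, Finset.card_sdiff_of_subset Finset.subset_union_left, hU, hcard₁]
      omega
    obtain ⟨x, hxdef⟩ := Finset.card_eq_one.1 hsd1
    obtain ⟨g, hgdef⟩ := Finset.card_eq_one.1 hsd2
    have hxC₁ : x ∈ C₁ := (Finset.mem_sdiff.1 (hxdef ▸ Finset.mem_singleton_self x)).1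
    have hxC₂ : x ∉ C₂ := (Finset.mem_sdiff.1 (hxdef ▸ Finset.mem_singleton_self x)).2
    have hgC₂ : g ∈ C₂ := (Finset.mem_sdiff.1 (hgdef ▸ Finset.mem_singleton_self g)).1
    have hgC₁ : g ∉ C₁ := (Finset.mem_sdiff.1 (hgdef ▸ Finset.mem_singleton_self g)).2
    -- C₃ is dependent
    have hdep : ¬ M.Indep ↑C₃ := by
      intro hind
      set I₀ : Finset ℕ := C₁.erase x with hI₀def
      have hI₀ind : M.Indep ↑I₀ := circ₁.2.2 x hxC₁
      have hI₀card : I₀.card = ℓ := by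
        rw [hI₀def, Finset.card_erase_of_mem hxC₁, hcard₁]
        omega
      have haug : ∃ e ∈ (↑C₃ : Set ℕ) \ ↑I₀, M.Indep (insert e ↑I₀) := by
        refine hI₀ind.augment hind ?_
        rw [Set.encard_coe_eq_coe_finsetCard, Set.encard_coe_eq_coe_finsetCard,
          hI₀card, hC₃card]
        exact_mod_cast Nat.lt_succ_self ℓ
      obtain ⟨y, hy, hyind⟩ := haug
      have hyC₃ : y ∈ C₃ := by exact_mod_cast hy.1
      have hyI₀ : y ∉ I₀ := by
        intro h; exact hy.2 (by exact_mod_cast h)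
      have hins : (insert y (↑I₀ : Set ℕ)) = ↑(insert y I₀) := by
        simp
      rw [hins] at hyind
      have hyU : y ∈ U := hC₃sub hyC₃
      -- y = x or y = g
      rcases Finset.mem_union.1 hyU with hyC₁ | hyC₂'
      · by_cases hyx : y = x
        · subst hyx
          rw [hI₀def, Finset.insert_erase hxC₁] at hyind
          exact circ₁.2.1 hyind
        · exact absurd (Finset.mem_erase.2 ⟨hyx, hyC₁⟩) hyI₀
      · by_cases hyC₁ : y ∈ C₁
        · by_cases hyx : y = x
          · subst hyx
            rw [hI₀def, Finset.insert_erase hxC₁] at hyind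
            exact circ₁.2.1 hyind
          · exact absurd (Finset.mem_erase.2 ⟨hyx, hyC₁⟩) hyI₀
        · have hyg : y = g := by
            have : y ∈ C₂ \ C₁ := Finset.mem_sdiff.2 ⟨hyC₂', hyC₁⟩
            rw [hgdef] at this
            exact Finset.mem_singleton.1 this
          rw [hyg] at hyind
          -- insert g I₀ = C₂
          have hUerase : (U.erase x).card = ℓ + 1 := by
            rw [Finset.card_erase_of_mem (Finset.mem_union_left _ hxC₁), hU]
            omega
          have hC₂eq : C₂ = U.erase x := by
            apply Finset.eq_of_subset_of_card_le
            · intro z hz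
              exact Finset.mem_erase.2 ⟨fun h => hxC₂ (h ▸ hz), Finset.mem_union_right _ hz⟩
            · rw [hUerase, hcard₂]
          have hgI₀ : g ∉ I₀ := fun h => hgC₁ (Finset.mem_of_mem_erase h)
          have hBeq : insert g I₀ = U.erase x := by
            apply Finset.eq_of_subset_of_card_le
            · intro z hz
              rcases Finset.mem_insert.1 hz with rfl | hz'
              · exact Finset.mem_erase.2 ⟨fun h => hgC₁ (h ▸ hxC₁), Finset.mem_union_right _ hgC₂⟩
              · exact Finset.mem_erase.2 ⟨(Finset.mem_erase.1 hz').1,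
                  Finset.mem_union_left _ (Finset.mem_of_mem_erase hz')⟩
            · rw [hUerase, Finset.card_insert_of_notMem hgI₀, hI₀card]
          rw [hBeq, ← hC₂eq] at hyind
          exact circ₂.2.1 hyind
    -- extract a circuit inside C₃; it must be all of C₃
    obtain ⟨D, hDsub, hDcirc⟩ := exists_circuitF_subset M C₃
      ((Finset.coe_subset.2 hC₃sub).trans hUE) hdep
    have hDcard : D.card = ℓ + 1 := by
      have h1 := hgen D hDcirc
      have h2 := Finset.card_le_card hDsub
      omega
    have hDeq : D = C₃ := Finset.eq_of_subset_of_card_le hDsub (by omega)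
    exact (hcirc C₃).1 ⟨hDeq ▸ hDcirc, hC₃card⟩
end

section
/- Let ℓ ≥ 1 and let C be a family of (ℓ+1)-element subsets of [n] satisfying condition (C_{ℓ+1}). For an ℓ-element subset I of [n] set X_I = I ∪ { e ∈ [n] : I ∪ {e} ∈ C }. Then every (ℓ+1)-element subset of X_I belongs to C. -/
theorem closure_subsets_in_family
    (ℓ n : ℕ) (hℓ : 1 ≤ ℓ) (𝒞 : Set (Finset ℕ))
    (h𝒞 : ∀ C ∈ 𝒞, C ⊆ Finset.Icc 1 n ∧ C.card = ℓ + 1)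
    (hcond : CondC ℓ 𝒞)
    (I : Finset ℕ) (hI : I ⊆ Finset.Icc 1 n) (hIcard : I.card = ℓ)
    (X : Finset ℕ)
    (hX : ∀ x : ℕ, x ∈ X ↔ (x ∈ I ∨ (x ∈ Finset.Icc 1 n ∧ insert x I ∈ 𝒞)))
    (S : Finset ℕ) (hS : S ⊆ X) (hScard : S.card = ℓ + 1) :
    S ∈ 𝒞 := by
  have key : ∀ k : ℕ, ∀ S : Finset ℕ, S ⊆ X → S.card = ℓ + 1 → (S \ I).card = k → S ∈ 𝒞 := by
    intro k
    induction k using Nat.strong_induction_on with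
    | _ k ih =>
      intro S hSX hSc hk
      have hinter : (S ∩ I).card + (S \ I).card = S.card := Finset.card_inter_add_card_sdiff S I
      match k, hk with
      | 0, hk =>
        exfalso
        have h1 : (S ∩ I).card ≤ I.card := Finset.card_le_card (Finset.inter_subset_right)
        omega
      | 1, hk =>
        obtain ⟨e, he⟩ := Finset.card_eq_one.mp hk
        have heS : e ∈ S ∧ e ∉ I := Finset.mem_sdiff.mp (he ▸ Finset.mem_singleton_self e)
        have hSI : S ∩ I = I := by
          apply Finset.eq_of_subset_of_card_le Finset.inter_subset_right
          omega
        have hIS : I ⊆ S := hSI ▸ Finset.inter_subset_left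
        have hSeq : S = insert e I := by
          apply (Finset.eq_of_subset_of_card_le _ _).symm
          · exact Finset.insert_subset heS.1 hIS
          · rw [Finset.card_insert_of_notMem heS.2]; omega
        have heX := hSX heS.1
        rcases (hX e).mp heX with h | h
        · exact absurd h heS.2
        · rw [hSeq]; exact h.2
      | (m+2), hk =>
        -- pick two distinct elements of S \ I
        have h2 : 1 < (S \ I).card := by omega
        obtain ⟨e, heM, f, hfM, hef⟩ := Finset.one_lt_card.mp h2
        have heS : e ∈ S := (Finset.mem_sdiff.mp heM).1
        have heI : e ∉ I := (Finset.mem_sdiff.mp heM).2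
        have hfS : f ∈ S := (Finset.mem_sdiff.mp hfM).1
        have hfI : f ∉ I := (Finset.mem_sdiff.mp hfM).2
        -- pick x ∈ I \ S
        have hIScard : (I ∩ S).card + (I \ S).card = I.card := Finset.card_inter_add_card_sdiff I S
        have hIS' : (I ∩ S).card = (S ∩ I).card := by rw [Finset.inter_comm]
        have hISpos : 0 < (I \ S).card := by omega
        obtain ⟨x, hxM⟩ := Finset.card_pos.mp hISpos
        have hxI : x ∈ I := (Finset.mem_sdiff.mp hxM).1
        have hxS : x ∉ S := (Finset.mem_sdiff.mp hxM).2
        have hxX : x ∈ X := (hX x).mpr (Or.inl hxI)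
        -- build the two smaller sets
        have mk : ∀ a ∈ S, a ∉ I → insert x (S.erase a) ∈ 𝒞 := by
          intro a haS haI
          apply ih (m+1) (by omega)
          · intro y hy
            rcases Finset.mem_insert.mp hy with rfl | hy
            · exact hxX
            · exact hSX (Finset.mem_of_mem_erase hy)
          · rw [Finset.card_insert_of_notMem (fun h => hxS (Finset.mem_of_mem_erase h)),
              Finset.card_erase_of_mem haS]
            omega
          · have : insert x (S.erase a) \ I = (S \ I).erase a := by
              ext y
              simp only [Finset.mem_sdiff, Finset.mem_insert, Finset.mem_erase]
              constructor
              · rintro ⟨rfl | ⟨hy1, hy2⟩, hyI⟩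
                · exact absurd hxI hyI
                · exact ⟨hy1, hy2, hyI⟩
              · rintro ⟨hy1, hy2, hy3⟩
                exact ⟨Or.inr ⟨hy1, hy2⟩, hy3⟩
            rw [this, Finset.card_erase_of_mem (Finset.mem_sdiff.mpr ⟨haS, haI⟩), hk]
            omega
        have hC1 := mk e heS heI
        have hC2 := mk f hfS hfI
        have hunion : insert x (S.erase e) ∪ insert x (S.erase f) = insert x S := by
          ext y
          simp only [Finset.mem_union, Finset.mem_insert, Finset.mem_erase]
          constructor
          · rintro ((rfl | ⟨-, h⟩) | (rfl | ⟨-, h⟩))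
            · exact Or.inl rfl
            · exact Or.inr h
            · exact Or.inl rfl
            · exact Or.inr h
          · rintro (rfl | hy)
            · exact Or.inl (Or.inl rfl)
            · by_cases hye : y = e
              · subst hye; exact Or.inr (Or.inr ⟨hef, hy⟩)
              · exact Or.inl (Or.inr ⟨hye, hy⟩)
        have hucard : (insert x (S.erase e) ∪ insert x (S.erase f)).card = ℓ + 2 := by
          rw [hunion, Finset.card_insert_of_notMem hxS]; omega
        exact hcond _ hC1 _ hC2 hucard S (by rw [hunion]; exact Finset.subset_insert x S) hSc
  exact key (S \ I).card S hS hScard rfl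
end

section
/- Let ℓ ≥ 1, n ≥ ℓ+1, and let C be a family of (ℓ+1)-element subsets of [n] satisfying condition (C_{ℓ+1}) which is not equal to the family of all (ℓ+1)-element subsets of [n]. Then the collection I = { I ⊆ [n] : |I| ≤ ℓ+1 and I ∉ C } is the family of independent sets of a matroid on [n] of rank ℓ+1; in particular I satisfies the independence augmentation axiom: for I₁, I₂ ∈ I with |I₂| = |I₁| + 1 there exists e ∈ I₂ \ I₁ with I₁ ∪ {e} ∈ I. -/
/-- Key exchange lemma: if `|I₁| = ℓ`, `|I₂| = ℓ+1` and `I₂ ∉ 𝒞`, then some `e ∈ I₂ \ I₁`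
has `insert e I₁ ∉ 𝒞`. -/
lemma aug_key (ℓ : ℕ) (𝒞 : Set (Finset ℕ)) (hcond : CondC ℓ 𝒞)
    (I₁ I₂ : Finset ℕ) (h1 : I₁.card = ℓ) (h2 : I₂.card = ℓ + 1) (h2c : I₂ ∉ 𝒞) :
    ∃ e ∈ I₂ \ I₁, insert e I₁ ∉ 𝒞 := by
  by_contra hcon
  push_neg at hcon
  have claim : ∀ j (A : Finset ℕ), A ⊆ I₁ ∪ I₂ → A.card = ℓ + 1 → (A \ I₁).card = j →
      A ∈ 𝒞 := by
    intro j
    induction j using Nat.strong_induction_on with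
    | _ j ih =>
      intro A hA hAcard hAj
      have hAI : (A ∩ I₁).card + j = ℓ + 1 := by
        rw [← hAj, ← hAcard, add_comm]
        exact Finset.card_sdiff_add_card_inter A I₁
      match j, hAj with
      | 0, hAj =>
        -- impossible: A ⊆ I₁ with |A| = ℓ+1 > ℓ
        have hsub : A ⊆ I₁ := by
          rw [← Finset.sdiff_eq_empty_iff_subset]
          exact Finset.card_eq_zero.mp hAj
        have := Finset.card_le_card hsub
        omega
      | 1, hAj =>
        obtain ⟨e, he⟩ := Finset.card_eq_one.mp hAj
        have heA : e ∈ A := (Finset.mem_sdiff.mp (he ▸ Finset.mem_singleton_self e)).1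
        have heI₁ : e ∉ I₁ := (Finset.mem_sdiff.mp (he ▸ Finset.mem_singleton_self e)).2
        have heI₂ : e ∈ I₂ := by
          rcases Finset.mem_union.mp (hA heA) with h | h
          · exact absurd h heI₁
          · exact h
        have hinter : A ∩ I₁ = I₁ := by
          apply Finset.eq_of_subset_of_card_le Finset.inter_subset_right
          omega
        have : A = insert e I₁ := by
          have := Finset.sdiff_union_inter A I₁
          rw [he, hinter] at this
          rw [← this, Finset.insert_eq]
        rw [this]
        exact hcon e (Finset.mem_sdiff.mpr ⟨heI₂, heI₁⟩)
      | (k+2), hAj =>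
        -- pick two distinct elements of A \ I₁
        obtain ⟨e, heAd, f, hfAd, hef⟩ := Finset.one_lt_card.mp (by omega : 1 < (A \ I₁).card)
        have heA : e ∈ A := (Finset.mem_sdiff.mp heAd).1
        have hfA : f ∈ A := (Finset.mem_sdiff.mp hfAd).1
        -- pick x ∈ I₁ \ A
        have hnsub : ¬ I₁ ⊆ A := by
          intro hsub
          have := Finset.card_sdiff_of_subset hsub
          omega
        obtain ⟨x, hxI₁, hxA⟩ := Finset.not_subset.mp hnsub
        have hxU : x ∈ I₁ ∪ I₂ := Finset.mem_union_left _ hxI₁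
        -- the two swapped sets
        have hstep : ∀ g ∈ A \ I₁, insert x (A.erase g) ∈ 𝒞 := by
          intro g hgAd
          have hgA : g ∈ A := (Finset.mem_sdiff.mp hgAd).1
          apply ih (k+1) (by omega)
          · intro y hy
            rcases Finset.mem_insert.mp hy with rfl | hy
            · exact hxU
            · exact hA (Finset.erase_subset _ _ hy)
          · rw [Finset.card_insert_of_notMem (fun hx => hxA (Finset.erase_subset _ _ hx)),
              Finset.card_erase_of_mem hgA]
            omega
          · have : insert x (A.erase g) \ I₁ = (A \ I₁).erase g := by
              ext y
              simp only [Finset.mem_sdiff, Finset.mem_insert, Finset.mem_erase]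
              constructor
              · rintro ⟨rfl | ⟨hy1, hy2⟩, hy3⟩
                · exact absurd hxI₁ hy3
                · exact ⟨hy1, hy2, hy3⟩
              · rintro ⟨hy1, hy2, hy3⟩
                exact ⟨Or.inr ⟨hy1, hy2⟩, hy3⟩
            rw [this, Finset.card_erase_of_mem hgAd, hAj]
            omega
        have hA₁ := hstep e heAd
        have hA₂ := hstep f hfAd
        have hunion : insert x (A.erase e) ∪ insert x (A.erase f) = insert x A := by
          ext y
          simp only [Finset.mem_union, Finset.mem_insert, Finset.mem_erase]
          constructor
          · rintro (⟨rfl | ⟨_, hy⟩⟩ | ⟨rfl | ⟨_, hy⟩⟩) <;> tauto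
          · rintro (rfl | hy)
            · tauto
            · by_cases hye : y = e
              · subst hye; exact Or.inr (Or.inr ⟨hef, hy⟩)
              · exact Or.inl (Or.inr ⟨hye, hy⟩)
        apply hcond _ hA₁ _ hA₂
        · rw [hunion, Finset.card_insert_of_notMem hxA]
          omega
        · rw [hunion]
          exact Finset.subset_insert x A
        · exact hAcard
  exact h2c (claim (I₂ \ I₁).card I₂ Finset.subset_union_right h2 rfl)

theorem independent_sets_form_matroid
    (ℓ n : ℕ) (hℓ : 1 ≤ ℓ) (hn : ℓ + 1 ≤ n) (𝒞 : Set (Finset ℕ))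
    (h𝒞 : ∀ C ∈ 𝒞, C ⊆ Finset.Icc 1 n ∧ C.card = ℓ + 1)
    (hcond : CondC ℓ 𝒞)
    (hne : 𝒞 ≠ {C : Finset ℕ | C ⊆ Finset.Icc 1 n ∧ C.card = ℓ + 1}) :
    (∃ M : Matroid ℕ, M.E = ↑(Finset.Icc 1 n) ∧ HasRank M (ℓ + 1) ∧
      ∀ S : Finset ℕ, M.Indep ↑S ↔
        (S ⊆ Finset.Icc 1 n ∧ S.card ≤ ℓ + 1 ∧ S ∉ 𝒞)) ∧
    (∀ I₁ I₂ : Finset ℕ,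
      I₁ ⊆ Finset.Icc 1 n → I₁.card ≤ ℓ + 1 → I₁ ∉ 𝒞 →
      I₂ ⊆ Finset.Icc 1 n → I₂.card ≤ ℓ + 1 → I₂ ∉ 𝒞 →
      I₂.card = I₁.card + 1 →
      ∃ e ∈ I₂ \ I₁, insert e I₁ ⊆ Finset.Icc 1 n ∧
        (insert e I₁).card ≤ ℓ + 1 ∧ insert e I₁ ∉ 𝒞) := by
  classical
  set Ind : Finset ℕ → Prop :=
    fun S => S ⊆ Finset.Icc 1 n ∧ S.card ≤ ℓ + 1 ∧ S ∉ 𝒞 with hInd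
  -- the augmentation property
  have haug : ∀ ⦃I J : Finset ℕ⦄, Ind I → Ind J → I.card < J.card →
      ∃ e ∈ J, e ∉ I ∧ Ind (insert e I) := by
    intro I J ⟨hIs, hIc, hI𝒞⟩ ⟨hJs, hJc, hJ𝒞⟩ hlt
    by_cases hIℓ : I.card < ℓ
    · have hns : ¬ J ⊆ I := fun hsub => by
        have := Finset.card_le_card hsub; omega
      obtain ⟨e, heJ, heI⟩ := Finset.not_subset.mp hns
      refine ⟨e, heJ, heI, ?_, ?_, ?_⟩
      · exact Finset.insert_subset (hJs heJ) hIs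
      · rw [Finset.card_insert_of_notMem heI]; omega
      · intro hmem
        have := (h𝒞 _ hmem).2
        rw [Finset.card_insert_of_notMem heI] at this
        omega
    · have hIeq : I.card = ℓ := by omega
      have hJeq : J.card = ℓ + 1 := by omega
      obtain ⟨e, heJI, hin⟩ := aug_key ℓ 𝒞 hcond I J hIeq hJeq hJ𝒞
      obtain ⟨heJ, heI⟩ := Finset.mem_sdiff.mp heJI
      refine ⟨e, heJ, heI, Finset.insert_subset (hJs heJ) hIs, ?_, hin⟩
      rw [Finset.card_insert_of_notMem heI]; omega
  have hempty : Ind ∅ := by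
    refine ⟨Finset.empty_subset _, by simp, fun hmem => ?_⟩
    have := (h𝒞 _ hmem).2
    simp at this
  have hsubset : ∀ ⦃I J : Finset ℕ⦄, Ind J → I ⊆ J → Ind I := by
    intro I J ⟨hJs, hJc, hJ𝒞⟩ hIJ
    refine ⟨hIJ.trans hJs, (Finset.card_le_card hIJ).trans hJc, fun hmem => ?_⟩
    have hIc := (h𝒞 _ hmem).2
    have : I = J := Finset.eq_of_subset_of_card_le hIJ (by omega)
    exact hJ𝒞 (this ▸ hmem)
  have hground : ∀ ⦃I : Finset ℕ⦄, Ind I → (I : Set ℕ) ⊆ ↑(Finset.Icc 1 n) := by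
    intro I hI
    exact_mod_cast Finset.coe_subset.mpr hI.1
  set M := (IndepMatroid.ofFinset (↑(Finset.Icc 1 n)) Ind hempty hsubset haug hground).matroid
    with hM
  have hMindep : ∀ S : Finset ℕ, M.Indep ↑S ↔ Ind S := by
    intro S
    exact IndepMatroid.ofFinset_indep (↑(Finset.Icc 1 n)) Ind hempty hsubset haug hground
  have hMindep' : ∀ X : Set ℕ, M.Indep X ↔ ∀ J : Finset ℕ, ↑J ⊆ X → Ind J := by
    intro X
    exact IndepMatroid.ofFinset_indep' (↑(Finset.Icc 1 n)) Ind hempty hsubset haug hground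
  -- a base of size ℓ+1
  obtain ⟨S₀, hS₀prop, hS₀𝒞⟩ : ∃ S₀ : Finset ℕ,
      (S₀ ⊆ Finset.Icc 1 n ∧ S₀.card = ℓ + 1) ∧ S₀ ∉ 𝒞 := by
    by_contra hc
    push_neg at hc
    apply hne
    ext C
    exact ⟨fun h => h𝒞 C h, fun h => hc C h⟩
  have hS₀ind : Ind S₀ := ⟨hS₀prop.1, le_of_eq hS₀prop.2, hS₀𝒞⟩
  have hbase : M.IsBase ↑S₀ := by
    apply Matroid.Indep.isBase_of_maximal ((hMindep S₀).mpr hS₀ind)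
    intro X hX hSX
    by_contra hne'
    obtain ⟨x, hxX, hxS⟩ : ∃ x ∈ X, x ∉ (S₀ : Set ℕ) := by
      by_cases h : X ⊆ ↑S₀
      · exact absurd (le_antisymm hSX h) hne'
      · exact Set.not_subset.mp h
    have hins : Ind (insert x S₀) := by
      apply (hMindep' X).mp hX
      push_cast
      exact Set.insert_subset hxX hSX
    have := hins.2.1
    rw [Finset.card_insert_of_notMem (by exact_mod_cast hxS)] at this
    omega
  refine ⟨⟨M, rfl, ⟨S₀, hbase, hS₀prop.2⟩, hMindep⟩, ?_⟩
  intro I₁ I₂ h1s h1c h1𝒞 h2s h2c h2𝒞 hcard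
  obtain ⟨e, heJ, heI, hind⟩ := haug ⟨h1s, h1c, h1𝒞⟩ ⟨h2s, h2c, h2𝒞⟩ (by omega)
  exact ⟨e, Finset.mem_sdiff.mpr ⟨heJ, heI⟩, hind.1, hind.2.1, hind.2.2⟩
end
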